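/- Let X be a real Hilbert space and Ψ : X → ℝ a sequentially weakly continuous functional such that Ψ(w) ≤ b·(1 + ‖w‖^l) for all w ∈ X, for some constants b > 0 and 0 < l < 2. Set Φ(w) := (1/2)‖w‖². Then for every λ > 0 and γ > 0 the truncated functional J_λ^{(γ)} is sequentially weakly lower semicontinuous and coercive, and it attains a global minimum on X, i.e. there exists w₂ ∈ X with J_λ^{(γ)}(w₂) ≤ J_λ^{(γ)}(w) for all w ∈ X. -/

import Mathlib

open Filter Topology

/-- The truncated functional `J_λ^{(γ)}` associated with `Φ(w) = (1/2)‖w‖²` and `Ψ`: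
equal to `γ² − λΨ(w)` when `(1/2)‖w‖² ≤ γ²` and to `(1/2)‖w‖² − λΨ(w)` otherwise. -/
noncomputable def truncatedEnergy {X : Type*} [NormedAddCommGroup X]
    (Ψ : X → ℝ) (lam γ : ℝ) : X → ℝ := fun w =>
  if (1 / 2 : ℝ) * ‖w‖ ^ 2 ≤ γ ^ 2 then γ ^ 2 - lam * Ψ w
  else (1 / 2 : ℝ) * ‖w‖ ^ 2 - lam * Ψ w


local notation "⟪" x ", " y "⟫" => @inner ℝ _ _ x y

lemma exists_weak_subseq {X : Type*} [NormedAddCommGroup X] [InnerProductSpace ℝ X]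
    [CompleteSpace X] (u : ℕ → X) (C : ℝ) (hC : ∀ n, ‖u n‖ ≤ C) :
    ∃ φ : ℕ → ℕ, StrictMono φ ∧ ∃ x : X,
      ∀ f : X →L[ℝ] ℝ, Tendsto (fun k => f (u (φ k))) atTop (𝓝 (f x)) := by
  have hC0 : 0 ≤ C := (norm_nonneg (u 0)).trans (hC 0)
  -- Step 1: diagonal extraction via compactness of a product of intervals
  set v : ℕ → (ℕ → ℝ) := fun n i => ⟪u i, u n⟫ with hv
  have hmem : ∀ n, v n ∈ Set.univ.pi (fun _ : ℕ => Set.Icc (-(C*C)) (C*C)) := by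
    intro n i _
    have h1 : |⟪u i, u n⟫| ≤ ‖u i‖ * ‖u n‖ := abs_real_inner_le_norm _ _
    have h2 : ‖u i‖ * ‖u n‖ ≤ C * C :=
      mul_le_mul (hC i) (hC n) (norm_nonneg _) hC0
    have := abs_le.mp (h1.trans h2)
    exact ⟨this.1, this.2⟩
  obtain ⟨c, -, φ, hφ, hconv⟩ :=
    (isCompact_univ_pi (fun _ : ℕ => isCompact_Icc)).tendsto_subseq hmem
  have hci : ∀ i, Tendsto (fun k => ⟪u i, u (φ k)⟫) atTop (𝓝 (c i)) :=
    fun i => (tendsto_pi_nhds.mp hconv) i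
  -- Step 2: convergence for z in the span
  have hspan : ∀ z ∈ Submodule.span ℝ (Set.range u),
      ∃ r : ℝ, Tendsto (fun k => ⟪z, u (φ k)⟫) atTop (𝓝 r) := by
    intro z hz
    induction hz using Submodule.span_induction with
    | mem z hz => obtain ⟨i, rfl⟩ := hz; exact ⟨c i, hci i⟩
    | zero => exact ⟨0, by simpa using tendsto_const_nhds⟩
    | add z z' _ _ hz hz' =>
        obtain ⟨r, hr⟩ := hz; obtain ⟨r', hr'⟩ := hz'
        exact ⟨r + r', by simpa [inner_add_left] using hr.add hr'⟩
    | smul a z _ hz =>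
        obtain ⟨r, hr⟩ := hz
        exact ⟨a * r, by simpa [real_inner_smul_left] using hr.const_mul a⟩
  -- Step 3: convergence for z in the closure of the span, by a Cauchy argument
  set Y : Submodule ℝ X := (Submodule.span ℝ (Set.range u)).topologicalClosure with hYdef
  have hclos : ∀ z ∈ Y, ∃ r : ℝ, Tendsto (fun k => ⟪z, u (φ k)⟫) atTop (𝓝 r) := by
    intro z hz
    apply cauchySeq_tendsto_of_complete
    rw [Metric.cauchySeq_iff]
    intro ε hε
    have hδ : (0:ℝ) < ε / (3 * (C + 1)) := by positivity
    have hz' : z ∈ closure ((Submodule.span ℝ (Set.range u) : Submodule ℝ X) : Set X) := hz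
    obtain ⟨z', hz'mem, hdist⟩ := Metric.mem_closure_iff.mp hz' _ hδ
    obtain ⟨r, hr⟩ := hspan z' hz'mem
    obtain ⟨N, hN⟩ := Metric.cauchySeq_iff.mp hr.cauchySeq (ε/3) (by linarith)
    refine ⟨N, fun m hm n hn => ?_⟩
    have key : ∀ k, |⟪z, u (φ k)⟫ - ⟪z', u (φ k)⟫| < ε/3 := by
      intro k
      rw [← inner_sub_left]
      have h1 : |⟪z - z', u (φ k)⟫| ≤ ‖z - z'‖ * ‖u (φ k)‖ := abs_real_inner_le_norm _ _
      have h2 : ‖z - z'‖ < ε / (3 * (C + 1)) := by rwa [← dist_eq_norm]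
      have h3 : ‖z - z'‖ * ‖u (φ k)‖ ≤ ‖z - z'‖ * (C+1) :=
        mul_le_mul_of_nonneg_left ((hC _).trans (by linarith)) (norm_nonneg _)
      have h4 : ‖z - z'‖ * (C+1) < (ε / (3 * (C+1))) * (C+1) :=
        mul_lt_mul_of_pos_right h2 (by linarith)
      have h5 : (ε / (3 * (C+1))) * (C+1) = ε/3 := by field_simp
      linarith
    have hmid := hN m hm n hn
    rw [Real.dist_eq] at hmid ⊢
    have := key m; have := key n
    calc |⟪z, u (φ m)⟫ - ⟪z, u (φ n)⟫|
        ≤ |⟪z, u (φ m)⟫ - ⟪z', u (φ m)⟫| + |⟪z', u (φ m)⟫ - ⟪z', u (φ n)⟫|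
          + |⟪z', u (φ n)⟫ - ⟪z, u (φ n)⟫| := by
            have := abs_sub_le (⟪z, u (φ m)⟫) (⟪z', u (φ m)⟫) (⟪z, u (φ n)⟫)
            have := abs_sub_le (⟪z', u (φ m)⟫) (⟪z', u (φ n)⟫) (⟪z, u (φ n)⟫)
            linarith
      _ < ε := by
            have h6 : |⟪z', u (φ n)⟫ - ⟪z, u (φ n)⟫| < ε / 3 := by
              rw [abs_sub_comm]; exact key n
            linarith [key m]
  -- Step 4: convergence for all z via orthogonal projection
  haveI : CompleteSpace Y := (Submodule.isClosed_topologicalClosure _).completeSpace_coe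
  have hall : ∀ z : X, ∃ r : ℝ, Tendsto (fun k => ⟪z, u (φ k)⟫) atTop (𝓝 r) := by
    intro z
    have hYu : ∀ n, u n ∈ Y :=
      fun n => (Submodule.le_topologicalClosure _) (Submodule.subset_span ⟨n, rfl⟩)
    have hproj : ∀ n, ⟪z, u n⟫ = ⟪(Y.orthogonalProjectionOnto z : X), u n⟫ := by
      intro n
      have horth : z - (Y.orthogonalProjectionOnto z : X) ∈ Yᗮ :=
        Submodule.sub_starProjection_mem_orthogonal (K := Y) z
      have h0 : ⟪z - (Y.orthogonalProjectionOnto z : X), u n⟫ = 0 :=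
        (Submodule.mem_orthogonal' _ _).mp horth (u n) (hYu n)
      have := inner_sub_left (𝕜 := ℝ) z (Y.orthogonalProjectionOnto z : X) (u n)
      rw [h0] at this
      linarith
    obtain ⟨r, hr⟩ := hclos (Y.orthogonalProjectionOnto z : X) (Y.orthogonalProjectionOnto z).2
    exact ⟨r, by simpa only [← hproj] using hr⟩
  -- Step 5: build the weak limit via Riesz representation
  choose L hL using hall
  have hadd : ∀ z z' : X, L (z + z') = L z + L z' := fun z z' =>
    tendsto_nhds_unique (by simpa [inner_add_left] using hL (z + z')) ((hL z).add (hL z'))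
  have hsmul : ∀ (a : ℝ) (z : X), L (a • z) = a * L z := fun a z =>
    tendsto_nhds_unique (by simpa [real_inner_smul_left] using hL (a • z)) ((hL z).const_mul a)
  have hbd : ∀ z : X, ‖L z‖ ≤ C * ‖z‖ := by
    intro z
    rw [Real.norm_eq_abs]
    refine le_of_tendsto (hL z).abs (Eventually.of_forall fun k => ?_)
    calc |⟪z, u (φ k)⟫| ≤ ‖z‖ * ‖u (φ k)‖ := abs_real_inner_le_norm _ _
      _ ≤ ‖z‖ * C := mul_le_mul_of_nonneg_left (hC _) (norm_nonneg _)
      _ = C * ‖z‖ := mul_comm _ _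
  set Lc : X →L[ℝ] ℝ :=
    LinearMap.mkContinuous ⟨⟨L, fun a b => hadd a b⟩, fun a z => by simpa using hsmul a z⟩
      C hbd with hLc
  set x : X := (InnerProductSpace.toDual ℝ X).symm Lc with hx
  refine ⟨φ, hφ, x, fun f => ?_⟩
  set z : X := (InnerProductSpace.toDual ℝ X).symm f with hz
  have hfz : ∀ w : X, f w = ⟪z, w⟫ := fun w =>
    (InnerProductSpace.toDual_symm_apply (y := f) (x := w)).symm
  have hfx : f x = L z := by
    rw [hfz x]
    have h1 : ⟪x, z⟫ = Lc z := InnerProductSpace.toDual_symm_apply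
    calc ⟪z, x⟫ = ⟪x, z⟫ := real_inner_comm _ _
      _ = Lc z := h1
      _ = L z := rfl
  have : Tendsto (fun k => ⟪z, u (φ k)⟫) atTop (𝓝 (L z)) := hL z
  rw [hfx]
  simpa only [← hfz] using this

lemma truncatedEnergy_eq_max {X : Type*} [NormedAddCommGroup X]
    (Ψ : X → ℝ) (lam γ : ℝ) (w : X) :
    truncatedEnergy Ψ lam γ w = max (γ ^ 2) ((1 / 2 : ℝ) * ‖w‖ ^ 2) - lam * Ψ w := by
  unfold truncatedEnergy
  split_ifs with h
  · rw [max_eq_left h]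
  · rw [max_eq_right (le_of_not_ge h)]

/-- In a real Hilbert space, if `Ψ` is sequentially weakly continuous with
`Ψ(w) ≤ b(1 + ‖w‖^l)` (`b > 0`, `0 < l < 2`), then for all `λ, γ > 0` the truncated
functional `J_λ^{(γ)}` is sequentially weakly lower semicontinuous, coercive, and attains
a global minimum on `X`. -/
theorem truncatedEnergy_wlsc_coercive_attains_min
    {X : Type*} [NormedAddCommGroup X] [InnerProductSpace ℝ X] [CompleteSpace X]
    (Ψ : X → ℝ)
    (hswc : ∀ (u : ℕ → X) (x : X),
      (∀ f : X →L[ℝ] ℝ, Tendsto (fun n => f (u n)) atTop (𝓝 (f x))) →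
      Tendsto (fun n => Ψ (u n)) atTop (𝓝 (Ψ x)))
    (b l : ℝ) (hb : 0 < b) (hl0 : 0 < l) (hl2 : l < 2)
    (hgrowth : ∀ w : X, Ψ w ≤ b * (1 + ‖w‖ ^ l))
    (lam γ : ℝ) (hlam : 0 < lam) (hγ : 0 < γ) :
    (∀ (u : ℕ → X) (x : X),
      (∀ f : X →L[ℝ] ℝ, Tendsto (fun n => f (u n)) atTop (𝓝 (f x))) →
      truncatedEnergy Ψ lam γ x ≤ Filter.liminf (fun n => truncatedEnergy Ψ lam γ (u n)) atTop) ∧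
    Tendsto (truncatedEnergy Ψ lam γ) (Filter.comap norm atTop) atTop ∧
    ∃ w₂ : X, ∀ w : X, truncatedEnergy Ψ lam γ w₂ ≤ truncatedEnergy Ψ lam γ w := by
  set J := truncatedEnergy Ψ lam γ with hJ
  have hmax : ∀ w : X, J w = max (γ ^ 2) ((1 / 2 : ℝ) * ‖w‖ ^ 2) - lam * Ψ w :=
    truncatedEnergy_eq_max Ψ lam γ
  -- Part 1 : sequential weak lower semicontinuity
  have hlsc : ∀ (u : ℕ → X) (x : X),
      (∀ f : X →L[ℝ] ℝ, Tendsto (fun n => f (u n)) atTop (𝓝 (f x))) →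
      J x ≤ Filter.liminf (fun n => J (u n)) atTop := by
    intro u x hw
    have hΨ : Tendsto (fun n => Ψ (u n)) atTop (𝓝 (Ψ x)) := hswc u x hw
    -- the sequence is bounded, by Banach–Steinhaus
    have hptw : ∀ z : X, ∃ C0 : ℝ, ∀ n : ℕ,
        ‖(InnerProductSpace.toDual ℝ X (u n)) z‖ ≤ C0 := by
      intro z
      have h1 := hw (InnerProductSpace.toDual ℝ X z)
      obtain ⟨C0, hC0⟩ := h1.norm.bddAbove_range
      refine ⟨C0, fun n => ?_⟩
      have h2 : (InnerProductSpace.toDual ℝ X (u n)) z = ⟪u n, z⟫ :=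
        InnerProductSpace.toDual_apply_apply
      have h3 : (InnerProductSpace.toDual ℝ X z) (u n) = ⟪z, u n⟫ :=
        InnerProductSpace.toDual_apply_apply
      have h4 : ‖(InnerProductSpace.toDual ℝ X z) (u n)‖ ≤ C0 := hC0 ⟨n, rfl⟩
      rw [h2, Real.norm_eq_abs, real_inner_comm]
      rwa [h3, Real.norm_eq_abs] at h4
    obtain ⟨C, hCn⟩ := banach_steinhaus hptw
    have hub : ∀ n, ‖u n‖ ≤ C := fun n => by
      have := hCn n
      rwa [LinearIsometryEquiv.norm_map] at this
    -- `J ∘ u` is bounded above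
    obtain ⟨c₀, hc₀⟩ := hΨ.bddBelow_range
    have hbddJ : IsBoundedUnder (· ≤ ·) atTop (fun n => J (u n)) := by
      refine isBoundedUnder_of ⟨max (γ ^ 2) ((1 / 2 : ℝ) * C ^ 2) - lam * c₀, fun n => ?_⟩
      rw [hmax]
      have h1 : max (γ ^ 2) ((1 / 2 : ℝ) * ‖u n‖ ^ 2) ≤ max (γ ^ 2) ((1 / 2 : ℝ) * C ^ 2) :=
        max_le_max le_rfl (by nlinarith [hub n, norm_nonneg (u n)])
      have h2 : c₀ ≤ Ψ (u n) := hc₀ ⟨n, rfl⟩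
      nlinarith
    have cobdd : IsCoboundedUnder (· ≥ ·) atTop (fun n => J (u n)) :=
      hbddJ.isCoboundedUnder_ge
    apply le_of_forall_sub_le
    intro ε hε
    refine le_liminf_of_le cobdd ?_
    have h1 : Tendsto (fun n => ⟪x, u n⟫) atTop (𝓝 (‖x‖ ^ 2)) := by
      have := hw (InnerProductSpace.toDual ℝ X x)
      simpa [InnerProductSpace.toDual_apply_apply, real_inner_self_eq_norm_sq] using this
    filter_upwards [h1.eventually (eventually_ge_nhds
        (show ‖x‖ ^ 2 - ε / 2 < ‖x‖ ^ 2 by linarith)),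
      hΨ.eventually (eventually_le_nhds
        (show Ψ x < Ψ x + ε / (2 * lam) from lt_add_of_pos_right _ (by positivity)))]
      with n ha hb'
    rw [hmax x, hmax (u n)]
    have key1 : (1 / 2 : ℝ) * ‖x‖ ^ 2 - ε / 2 ≤ (1 / 2 : ℝ) * ‖u n‖ ^ 2 := by
      have hns := norm_sub_sq_real x (u n)
      nlinarith [sq_nonneg ‖x - u n‖]
    have key2 : max (γ ^ 2) ((1 / 2 : ℝ) * ‖x‖ ^ 2)
        ≤ max (γ ^ 2) ((1 / 2 : ℝ) * ‖u n‖ ^ 2) + ε / 2 := by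
      have hA := le_max_left (γ ^ 2) ((1 / 2 : ℝ) * ‖u n‖ ^ 2)
      have hB := le_max_right (γ ^ 2) ((1 / 2 : ℝ) * ‖u n‖ ^ 2)
      exact max_le (by linarith) (by linarith)
    have key3 : lam * Ψ (u n) ≤ lam * Ψ x + ε / 2 := by
      have h5 := mul_le_mul_of_nonneg_left hb' hlam.le
      have h6 : lam * (ε / (2 * lam)) = ε / 2 := by field_simp
      nlinarith
    linarith
  -- Part 2 : coercivity
  have hco : Tendsto J (Filter.comap norm atTop) atTop := by
    rw [tendsto_atTop]
    intro M
    refine Filter.eventually_comap.mpr ?_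
    have hδpos : (0:ℝ) < 1 / (4 * lam * b) := by positivity
    have h0 : Tendsto (fun t : ℝ => t ^ (l - 2)) atTop (𝓝 0) := by
      have := tendsto_rpow_neg_atTop (show (0:ℝ) < 2 - l by linarith)
      simpa [neg_sub] using this
    have hg : Tendsto (fun t : ℝ => (1 / 4 : ℝ) * t ^ 2 - lam * b) atTop atTop :=
      tendsto_atTop_add_const_right _ _
        (Tendsto.const_mul_atTop (by norm_num) (tendsto_pow_atTop two_ne_zero))
    filter_upwards [h0.eventually (eventually_le_nhds hδpos), hg.eventually_ge_atTop M,
      eventually_ge_atTop (1:ℝ)] with t h1 h2 h3 w hwt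
    have ht0 : (0:ℝ) < t := lt_of_lt_of_le one_pos h3
    have hrl : t ^ l = t ^ (l - 2) * t ^ 2 := by
      rw [← Real.rpow_natCast t 2, ← Real.rpow_add ht0]
      norm_num
    have hΨw : Ψ w ≤ b * (1 + t ^ l) := by rw [← hwt]; exact hgrowth w
    have hmul : t ^ (l - 2) * t ^ 2 ≤ (1 / (4 * lam * b)) * t ^ 2 :=
      mul_le_mul_of_nonneg_right h1 (sq_nonneg t)
    have hδeq : lam * b * ((1 / (4 * lam * b)) * t ^ 2) = (1 / 4 : ℝ) * t ^ 2 := by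
      field_simp
    have hbound : lam * (b * (1 + t ^ l)) ≤ lam * b + (1 / 4 : ℝ) * t ^ 2 := by
      calc lam * (b * (1 + t ^ l)) = lam * b + lam * b * (t ^ (l - 2) * t ^ 2) := by
            rw [hrl]; ring
        _ ≤ lam * b + lam * b * ((1 / (4 * lam * b)) * t ^ 2) := by
            have := mul_le_mul_of_nonneg_left hmul (by positivity : (0:ℝ) ≤ lam * b)
            linarith
        _ = lam * b + (1 / 4 : ℝ) * t ^ 2 := by rw [hδeq]
    have hA : lam * Ψ w ≤ lam * b + (1 / 4 : ℝ) * t ^ 2 :=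
      le_trans (mul_le_mul_of_nonneg_left hΨw hlam.le) hbound
    rw [hmax w, hwt]
    have hhalf := le_max_right (γ ^ 2) ((1 / 2 : ℝ) * t ^ 2)
    linarith
  refine ⟨hlsc, hco, ?_⟩
  -- Part 3 : existence of a global minimum
  -- J is bounded below
  have hRx : ∀ M : ℝ, ∃ R : ℝ, ∀ w : X, R ≤ ‖w‖ → M ≤ J w := by
    intro M
    have hev := (tendsto_atTop.mp hco) M
    rw [Filter.eventually_comap] at hev
    obtain ⟨R, hR⟩ := eventually_atTop.mp hev
    exact ⟨R, fun w hw => hR ‖w‖ hw w rfl⟩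
  obtain ⟨R₀, hR₀⟩ := hRx (γ ^ 2)
  set R' : ℝ := max R₀ 0 with hR'
  have hBlow : ∀ w : X, γ ^ 2 - lam * (b * (1 + R' ^ l)) ≤ J w := by
    intro w
    rcases le_or_gt R' ‖w‖ with h | h
    · have h1 := hR₀ w ((le_max_left _ _).trans h)
      have h2 : 0 ≤ lam * (b * (1 + R' ^ l)) := by
        have : (0:ℝ) ≤ R' ^ l := Real.rpow_nonneg (le_max_right _ _) l
        positivity
      linarith
    · rw [hmax w]
      have h1 : Ψ w ≤ b * (1 + R' ^ l) := by
        refine (hgrowth w).trans ?_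
        have : ‖w‖ ^ l ≤ R' ^ l := Real.rpow_le_rpow (norm_nonneg w) h.le hl0.le
        nlinarith
      have h2 : lam * Ψ w ≤ lam * (b * (1 + R' ^ l)) := mul_le_mul_of_nonneg_left h1 hlam.le
      have h3 := le_max_left (γ ^ 2) ((1 / 2 : ℝ) * ‖w‖ ^ 2)
      linarith
  have hbdd : BddBelow (Set.range J) := by
    refine ⟨γ ^ 2 - lam * (b * (1 + R' ^ l)), ?_⟩
    rintro _ ⟨w, rfl⟩
    exact hBlow w
  set m : ℝ := sInf (Set.range J) with hm
  have hne : (Set.range J).Nonempty := ⟨J 0, ⟨0, rfl⟩⟩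
  have hm_le : ∀ w : X, m ≤ J w := fun w => csInf_le hbdd ⟨w, rfl⟩
  have hseq : ∀ n : ℕ, ∃ w : X, J w < m + 1 / (n + 1) := by
    intro n
    have hlt : m < m + 1 / ((n:ℝ) + 1) := by
      have : (0:ℝ) < 1 / ((n:ℝ) + 1) := by positivity
      linarith
    obtain ⟨y, ⟨w, rfl⟩, hy⟩ := exists_lt_of_csInf_lt hne hlt
    exact ⟨w, hy⟩
  choose u hu using hseq
  have hJu : Tendsto (fun n => J (u n)) atTop (𝓝 m) := by
    have h2 : Tendsto (fun n : ℕ => m + 1 / ((n:ℝ) + 1)) atTop (𝓝 m) := by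
      have := tendsto_one_div_add_atTop_nhds_zero_nat (𝕜 := ℝ)
      simpa using tendsto_const_nhds.add this
    exact tendsto_of_tendsto_of_tendsto_of_le_of_le tendsto_const_nhds h2
      (fun n => hm_le (u n)) (fun n => (hu n).le)
  -- the minimizing sequence is bounded
  obtain ⟨R₁, hR₁⟩ := hRx (m + 1)
  have hub : ∀ n, ‖u n‖ ≤ max R₁ 0 := by
    intro n
    by_contra hcon
    push_neg at hcon
    have h1 : R₁ ≤ ‖u n‖ := (le_max_left _ _).trans hcon.le
    have h2 := hR₁ (u n) h1
    have h3 : 1 / ((n:ℝ) + 1) ≤ 1 := by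
      rw [div_le_one (by positivity)]
      have : (0:ℝ) ≤ (n:ℝ) := Nat.cast_nonneg n
      linarith
    have := hu n
    linarith
  obtain ⟨φ, hφ, x, hx⟩ := exists_weak_subseq u (max R₁ 0) hub
  refine ⟨x, fun w => ?_⟩
  have h1 : J x ≤ Filter.liminf (fun k => J (u (φ k))) atTop := hlsc (u ∘ φ) x hx
  have h2 : Filter.liminf (fun k => J (u (φ k))) atTop = m :=
    (hJu.comp hφ.tendsto_atTop).liminf_eq
  calc J x ≤ m := h2 ▸ h1
    _ ≤ J w := hm_le w
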